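/- (Exact observability estimate for conservative port-Hamiltonian systems, trajectory version of Theorem 3.2.) Assume in addition that G₀* = −G₀. Let x : [0,∞) × [0,1] → ℂⁿ be such that (t,ζ) ↦ x(t,ζ), (t,ζ) ↦ ∂x/∂t(t,ζ) and (t,ζ) ↦ ∂(H x)/∂ζ(t,ζ) exist and are continuous, and suppose: (i) ∂x/∂t(t,ζ) = P₁ ∂(H x)/∂ζ(t,ζ) + G₀ H(ζ) x(t,ζ) for all t ≥ 0, ζ ∈ [0,1]; (ii) W_B·((H x)(t,1), (H x)(t,0)) = 0 for all t ≥ 0; (iii) ∫₀¹ ‖x(t,ζ)‖² dζ → 0 as t → ∞. Define the output y(t) := W_C·((H x)(t,1), (H x)(t,0)). If t ↦ ‖y(t)‖² is integrable on [0,∞), then ∫₀^∞ ‖y(t)‖² dt ≥ (2/‖P‖)·‖x(0,·)‖_X², where ‖x(0,·)‖_X² = (1/2)∫₀¹ x(0,ζ)* H(ζ) x(0,ζ) dζ and ‖P‖ is the operator norm of P. -/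

import Mathlib

open Matrix MeasureTheory Filter
open scoped ComplexOrder


section AuxObs

lemma auxObs_dot_deriv {m : Type*} [Fintype m] {u v : ℝ → m → ℂ} {u' v' : m → ℂ}
    {s : Set ℝ} {t : ℝ}
    (hu : HasDerivWithinAt u u' s t) (hv : HasDerivWithinAt v v' s t) :
    HasDerivWithinAt (fun τ => star (u τ) ⬝ᵥ v τ)
      (star u' ⬝ᵥ v t + star (u t) ⬝ᵥ v') s t := by
  have hu' := hasDerivWithinAt_pi.1 hu
  have hv' := hasDerivWithinAt_pi.1 hv
  simp only [dotProduct, Pi.star_apply]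
  have h : ∀ i ∈ Finset.univ, HasDerivWithinAt (fun τ => star (u τ i) * v τ i)
      (star (u' i) * v t i + star (u t i) * v' i) s t :=
    fun i _ => ((hu' i).star.mul (hv' i))
  simpa [Finset.sum_add_distrib] using HasDerivWithinAt.fun_sum h

lemma auxObs_mulVec_deriv {m : Type*} [Fintype m] (M : Matrix m m ℂ) {v : ℝ → m → ℂ}
    {v' : m → ℂ} {s : Set ℝ} {t : ℝ} (hv : HasDerivWithinAt v v' s t) :
    HasDerivWithinAt (fun τ => M *ᵥ v τ) (M *ᵥ v') s t := by
  rw [hasDerivWithinAt_pi]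
  intro i
  simp only [mulVec, dotProduct]
  exact HasDerivWithinAt.fun_sum fun j _ => ((hasDerivWithinAt_pi.1 hv j).const_mul (M i j))

lemma auxObs_pointwise {m : Type*} [Fintype m] (P₁ G₀ Hm : Matrix m m ℂ)
    (hP₁ : P₁ᴴ = P₁) (hG₀ : G₀ᴴ = -G₀) (hH : Hmᴴ = Hm)
    (xv wzv : m → ℂ) :
    star (P₁ *ᵥ wzv + G₀ *ᵥ (Hm *ᵥ xv)) ⬝ᵥ (Hm *ᵥ xv)
      + star xv ⬝ᵥ (Hm *ᵥ (P₁ *ᵥ wzv + G₀ *ᵥ (Hm *ᵥ xv)))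
    = star wzv ⬝ᵥ (P₁ *ᵥ (Hm *ᵥ xv)) + star (Hm *ᵥ xv) ⬝ᵥ (P₁ *ᵥ wzv) := by
  have h1 : ∀ z : m → ℂ, star xv ⬝ᵥ (Hm *ᵥ z) = star (Hm *ᵥ xv) ⬝ᵥ z := by
    intro z
    rw [dotProduct_mulVec, star_mulVec, hH]
  have h2 : star (P₁ *ᵥ wzv) ⬝ᵥ (Hm *ᵥ xv) = star wzv ⬝ᵥ (P₁ *ᵥ (Hm *ᵥ xv)) := by
    rw [star_mulVec, hP₁, ← dotProduct_mulVec]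
  have h3 : star (G₀ *ᵥ (Hm *ᵥ xv)) ⬝ᵥ (Hm *ᵥ xv)
      = -(star (Hm *ᵥ xv) ⬝ᵥ (G₀ *ᵥ (Hm *ᵥ xv))) := by
    rw [star_mulVec, hG₀, ← dotProduct_mulVec]
    simp [Matrix.neg_mulVec, dotProduct_neg]
  rw [star_add, add_dotProduct, mulVec_add, dotProduct_add, h1 (P₁ *ᵥ wzv),
    h1 (G₀ *ᵥ (Hm *ᵥ xv)), h2, h3]
  ring

lemma auxObs_blocks (n : ℕ) (P₁ : Matrix (Fin n) (Fin n) ℂ) (hP₁ : P₁ᴴ = P₁) :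
    (((Real.sqrt 2 : ℂ))⁻¹ • Matrix.fromBlocks P₁ (-P₁) 1 1)ᴴ * (Matrix.fromBlocks 0 1 1 0) *
      (((Real.sqrt 2 : ℂ))⁻¹ • Matrix.fromBlocks P₁ (-P₁) 1 1)
    = Matrix.fromBlocks P₁ 0 0 (-P₁) := by
  have hs : star (((Real.sqrt 2 : ℝ) : ℂ))⁻¹ = ((Real.sqrt 2 : ℝ) : ℂ)⁻¹ := by
    simp [Complex.star_def]
  have h2 : ((Real.sqrt 2 : ℝ) : ℂ)⁻¹ * ((Real.sqrt 2 : ℝ) : ℂ)⁻¹ = (2 : ℂ)⁻¹ := by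
    rw [← mul_inv, ← Complex.ofReal_mul, Real.mul_self_sqrt (by norm_num)]
    norm_num
  rw [Matrix.conjTranspose_smul, hs, Matrix.smul_mul, Matrix.smul_mul, Matrix.mul_smul,
    smul_smul, h2, Matrix.fromBlocks_conjTranspose, hP₁, Matrix.conjTranspose_neg, hP₁]
  rw [Matrix.fromBlocks_multiply, Matrix.fromBlocks_multiply]
  ext i j
  cases i <;> cases j <;>
    simp [Matrix.fromBlocks, Matrix.smul_apply] <;> ring

lemma auxObs_re_bound {k : Type*} [Fintype k] [DecidableEq k] (A : Matrix k k ℂ) (v : k → ℂ) :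
    -(‖Matrix.toEuclideanCLM (𝕜 := ℂ) A‖ * ‖(EuclideanSpace.equiv k ℂ).symm v‖ ^ 2)
      ≤ (star v ⬝ᵥ (A *ᵥ v)).re := by
  set T := Matrix.toEuclideanCLM (𝕜 := ℂ) A
  set v' : EuclideanSpace ℂ k := (EuclideanSpace.equiv k ℂ).symm v with hv'
  have h1 : star v ⬝ᵥ (A *ᵥ v) = inner (𝕜 := ℂ) v' (T v') := by
    rw [EuclideanSpace.inner_eq_star_dotProduct, dotProduct_comm]
    rfl
  have h2 : ‖inner (𝕜 := ℂ) v' (T v')‖ ≤ ‖T‖ * ‖v'‖ ^ 2 := by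
    calc ‖inner (𝕜 := ℂ) v' (T v')‖ ≤ ‖v'‖ * ‖T v'‖ := norm_inner_le_norm _ _
    _ ≤ ‖v'‖ * (‖T‖ * ‖v'‖) := by
        have := T.le_opNorm v'
        nlinarith [norm_nonneg v']
    _ = ‖T‖ * ‖v'‖ ^ 2 := by ring
  have h3 := Complex.abs_re_le_norm (inner (𝕜 := ℂ) v' (T v'))
  rw [h1]
  have habs : ‖(inner (𝕜 := ℂ) v' (T v'))‖ = ‖inner (𝕜 := ℂ) v' (T v')‖ := rfl
  rw [habs] at h3
  linarith [neg_abs_le ((inner (𝕜 := ℂ) v' (T v')).re)]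

lemma auxObs_norm_sum_elim {k : Type*} [Fintype k] (a : k → ℂ) :
    ‖(EuclideanSpace.equiv (k ⊕ k) ℂ).symm (Sum.elim (0 : k → ℂ) a)‖
      = ‖(EuclideanSpace.equiv k ℂ).symm a‖ := by
  simp [EuclideanSpace.norm_eq, Fintype.sum_sum_type]

lemma auxObs_q_bound {k : Type*} [Fintype k] (M : Matrix k k ℂ) (v : k → ℂ) :
    ‖star v ⬝ᵥ (M *ᵥ v)‖
      ≤ (∑ i, ∑ j, ‖M i j‖) * ‖(EuclideanSpace.equiv k ℂ).symm v‖ ^ 2 := by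
  set S := ‖(EuclideanSpace.equiv k ℂ).symm v‖ with hS
  have hS0 : 0 ≤ S := norm_nonneg _
  have hvi : ∀ i, ‖v i‖ ≤ S := by
    intro i
    rw [hS, EuclideanSpace.norm_eq]
    have h1 : ‖v i‖ ^ 2 ≤ ∑ j, ‖(EuclideanSpace.equiv k ℂ).symm v j‖ ^ 2 := by
      have := Finset.single_le_sum
        (f := fun j => ‖(EuclideanSpace.equiv k ℂ).symm v j‖ ^ 2)
        (fun j _ => by positivity) (Finset.mem_univ i)
      simpa using this
    have h2 := Real.sqrt_le_sqrt h1
    rwa [Real.sqrt_sq (norm_nonneg _)] at h2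
  calc ‖star v ⬝ᵥ (M *ᵥ v)‖
      ≤ ∑ i, ‖star (v i) * (M *ᵥ v) i‖ := by
        simpa [dotProduct] using norm_sum_le Finset.univ
          (fun i => star (v i) * (M *ᵥ v) i)
    _ ≤ ∑ i, ∑ j, ‖M i j‖ * S ^ 2 := by
        refine Finset.sum_le_sum fun i _ => ?_
        rw [norm_mul]
        calc ‖star (v i)‖ * ‖(M *ᵥ v) i‖
            ≤ S * ∑ j, ‖M i j‖ * S := by
              refine mul_le_mul ?_ ?_ (norm_nonneg _) hS0
              · simpa using hvi i
              · simp only [mulVec, dotProduct]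
                refine le_trans (norm_sum_le _ _) ?_
                refine Finset.sum_le_sum fun j _ => ?_
                rw [norm_mul]
                exact mul_le_mul_of_nonneg_left (hvi j) (norm_nonneg _)
          _ = ∑ j, ‖M i j‖ * S ^ 2 := by
              rw [Finset.mul_sum]
              refine Finset.sum_congr rfl fun j _ => by ring
    _ = (∑ i, ∑ j, ‖M i j‖) * S ^ 2 := by
        rw [Finset.sum_mul]
        exact Finset.sum_congr rfl fun i _ => (Finset.sum_mul _ _ _).symm

lemma auxObs_contOn_dot {α : Type*} [TopologicalSpace α] {k : Type*} [Fintype k]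
    {u v : α → k → ℂ} {s : Set α}
    (hu : ContinuousOn u s) (hv : ContinuousOn v s) :
    ContinuousOn (fun p => star (u p) ⬝ᵥ v p) s := by
  simp only [dotProduct, Pi.star_apply]
  refine continuousOn_finset_sum _ fun i _ => ContinuousOn.mul ?_ ?_
  · exact continuous_star.comp_continuousOn ((continuous_apply i).comp_continuousOn hu)
  · exact (continuous_apply i).comp_continuousOn hv

lemma auxObs_contOn_mulVec {α : Type*} [TopologicalSpace α] {k : Type*} [Fintype k]
    (M : Matrix k k ℂ) {v : α → k → ℂ} {s : Set α} (hv : ContinuousOn v s) :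
    ContinuousOn (fun p => M *ᵥ v p) s := by
  refine continuousOn_pi.2 fun i => ?_
  simp only [mulVec, dotProduct]
  exact continuousOn_finset_sum _ fun j _ =>
    ((continuous_apply j).comp_continuousOn hv).const_smul (M i j) |>.congr
      (fun p hp => by simp [smul_eq_mul])

lemma auxObs_slice1 {E : Type*} [TopologicalSpace E] {F : ℝ × ℝ → E} {A B : Set ℝ}
    (hF : ContinuousOn F (A ×ˢ B)) {T : ℝ} (hT : T ∈ A) :
    ContinuousOn (fun ζ => F (T, ζ)) B :=
  hF.comp ((continuous_const.prodMk continuous_id).continuousOn) (fun ζ hζ => ⟨hT, hζ⟩)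

lemma auxObs_slice2 {E : Type*} [TopologicalSpace E] {F : ℝ × ℝ → E} {A B : Set ℝ}
    (hF : ContinuousOn F (A ×ˢ B)) {Z : ℝ} (hZ : Z ∈ B) :
    ContinuousOn (fun t => F (t, Z)) A :=
  hF.comp ((continuous_id.prodMk continuous_const).continuousOn) (fun t ht => ⟨ht, hZ⟩)

end AuxObs

set_option maxHeartbeats 1000000 in
set_option synthInstance.maxHeartbeats 200000 in
/-- Exact observability estimate for conservative port-Hamiltonian systems,
trajectory version of Theorem 3.2: if `G₀* = −G₀` and `x(t,ζ)` is a classical solution of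
`∂x/∂t = P₁ ∂(Hx)/∂ζ + G₀ H x` with boundary condition `W_B ((Hx)(t,1),(Hx)(t,0)) = 0` whose
`L²`-norm tends to `0`, and whose output `y(t) := W_C ((Hx)(t,1),(Hx)(t,0))` has `‖y‖²`
integrable on `[0,∞)`, then `∫₀^∞ ‖y(t)‖² dt ≥ (2/‖P‖)·‖x(0,·)‖_X²`. -/
theorem exact_observability_estimate
    (n : ℕ) (hn : 0 < n)
    (P₁ : Matrix (Fin n) (Fin n) ℂ) (hP₁herm : P₁.IsHermitian) (hP₁inv : IsUnit P₁)
    (G₀ : Matrix (Fin n) (Fin n) ℂ) (hG₀ : G₀ᴴ = -G₀)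
    (H : ℝ → Matrix (Fin n) (Fin n) ℂ)
    (hHcont : ∀ i j, ContinuousOn (fun ζ => H ζ i j) (Set.Icc 0 1))
    (hHherm : ∀ ζ ∈ Set.Icc (0 : ℝ) 1, (H ζ).IsHermitian)
    (hHpos : ∀ ζ ∈ Set.Icc (0 : ℝ) 1, (H ζ).PosDef)
    (W_B W_C : Matrix (Fin n) (Fin n ⊕ Fin n) ℂ)
    (W_BC : Matrix (Fin n ⊕ Fin n) (Fin n ⊕ Fin n) ℂ)
    (hW_BC : W_BC = Matrix.fromRows W_B W_C)
    (hW_BCinv : IsUnit W_BC)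
    (R₀ : Matrix (Fin n ⊕ Fin n) (Fin n ⊕ Fin n) ℂ)
    (hR₀ : R₀ = ((Real.sqrt 2 : ℂ))⁻¹ • Matrix.fromBlocks P₁ (-P₁) 1 1)
    (Sig : Matrix (Fin n ⊕ Fin n) (Fin n ⊕ Fin n) ℂ)
    (hSig : Sig = Matrix.fromBlocks 0 1 1 0)
    (P : Matrix (Fin n ⊕ Fin n) (Fin n ⊕ Fin n) ℂ)
    (hP : P = (W_BC⁻¹)ᴴ * R₀ᴴ * Sig * R₀ * W_BC⁻¹)
    -- the trajectory `x(t,ζ)` and its partial derivatives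
    (x xt wz : ℝ → ℝ → Fin n → ℂ)
    (hxt : ∀ t ∈ Set.Ici (0 : ℝ), ∀ ζ ∈ Set.Icc (0 : ℝ) 1,
      HasDerivWithinAt (fun τ => x τ ζ) (xt t ζ) (Set.Ici 0) t)
    (hwz : ∀ t ∈ Set.Ici (0 : ℝ), ∀ ζ ∈ Set.Icc (0 : ℝ) 1,
      HasDerivWithinAt (fun ξ => (H ξ) *ᵥ x t ξ) (wz t ζ) (Set.Icc 0 1) ζ)
    (hxcont : ContinuousOn (fun p : ℝ × ℝ => x p.1 p.2) (Set.Ici 0 ×ˢ Set.Icc 0 1))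
    (hxtcont : ContinuousOn (fun p : ℝ × ℝ => xt p.1 p.2) (Set.Ici 0 ×ˢ Set.Icc 0 1))
    (hwzcont : ContinuousOn (fun p : ℝ × ℝ => wz p.1 p.2) (Set.Ici 0 ×ˢ Set.Icc 0 1))
    -- (i) the PDE
    (hpde : ∀ t ∈ Set.Ici (0 : ℝ), ∀ ζ ∈ Set.Icc (0 : ℝ) 1,
      xt t ζ = P₁ *ᵥ wz t ζ + G₀ *ᵥ ((H ζ) *ᵥ x t ζ))
    -- (ii) the boundary condition
    (hbdry : ∀ t ∈ Set.Ici (0 : ℝ),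
      W_B *ᵥ Sum.elim ((H 1) *ᵥ x t 1) ((H 0) *ᵥ x t 0) = 0)
    -- (iii) decay of the L²-norm
    (hdecay : Tendsto
      (fun t => ∫ ζ in (0 : ℝ)..1, ‖(EuclideanSpace.equiv (Fin n) ℂ).symm (x t ζ)‖ ^ 2)
      atTop (nhds 0))
    -- the output
    (y : ℝ → Fin n → ℂ)
    (hy : ∀ t, y t = W_C *ᵥ Sum.elim ((H 1) *ᵥ x t 1) ((H 0) *ᵥ x t 0))
    (hyint : IntegrableOn (fun t => ‖(EuclideanSpace.equiv (Fin n) ℂ).symm (y t)‖ ^ 2)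
      (Set.Ici 0)) :
    (2 / ‖Matrix.toEuclideanCLM (𝕜 := ℂ) P‖) *
        ((1 / 2 : ℝ) * (∫ ζ in (0 : ℝ)..1, star (x 0 ζ) ⬝ᵥ ((H ζ) *ᵥ x 0 ζ)).re) ≤
      ∫ t in Set.Ici (0 : ℝ), ‖(EuclideanSpace.equiv (Fin n) ℂ).symm (y t)‖ ^ 2 := by
  have h01 : (0:ℝ) ≤ 1 := zero_le_one
  have huIcc : Set.uIcc (0:ℝ) 1 = Set.Icc 0 1 := Set.uIcc_of_le h01
  have hHerm : ∀ ζ ∈ Set.Icc (0:ℝ) 1, (H ζ)ᴴ = H ζ := fun ζ hζ => hHherm ζ hζ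
  have h0mem : (0:ℝ) ∈ Set.Icc (0:ℝ) 1 := ⟨le_refl 0, h01⟩
  have h1mem : (1:ℝ) ∈ Set.Icc (0:ℝ) 1 := ⟨h01, le_refl 1⟩
  have hdet : IsUnit W_BC.det := (Matrix.isUnit_iff_isUnit_det _).1 hW_BCinv
  set qf : ℝ → ℝ → ℂ := fun t ζ => star (x t ζ) ⬝ᵥ (H ζ *ᵥ x t ζ) with hqf
  set gf : ℝ → ℝ → ℂ := fun t ζ => star (H ζ *ᵥ x t ζ) ⬝ᵥ (P₁ *ᵥ (H ζ *ᵥ x t ζ)) with hgf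
  set Df : ℝ → ℝ → ℂ := fun t ζ =>
    star (wz t ζ) ⬝ᵥ (P₁ *ᵥ (H ζ *ᵥ x t ζ)) + star (H ζ *ᵥ x t ζ) ⬝ᵥ (P₁ *ᵥ wz t ζ) with hDf
  -- continuity facts
  have hwcont : ContinuousOn (fun p : ℝ × ℝ => H p.2 *ᵥ x p.1 p.2)
      (Set.Ici 0 ×ˢ Set.Icc 0 1) := by
    refine continuousOn_pi.2 fun i => ?_
    simp only [mulVec, dotProduct]
    refine continuousOn_finset_sum _ fun j _ => ContinuousOn.mul ?_ ?_
    · exact (hHcont i j).comp continuous_snd.continuousOn (fun p hp => hp.2)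
    · exact (continuous_apply j).comp_continuousOn hxcont
  have hDcont : ContinuousOn (fun p : ℝ × ℝ => Df p.1 p.2) (Set.Ici 0 ×ˢ Set.Icc 0 1) := by
    simp only [hDf]
    exact (auxObs_contOn_dot hwzcont (auxObs_contOn_mulVec P₁ hwcont)).add
      (auxObs_contOn_dot hwcont (auxObs_contOn_mulVec P₁ hwzcont))
  have hqcont : ContinuousOn (fun p : ℝ × ℝ => qf p.1 p.2) (Set.Ici 0 ×ˢ Set.Icc 0 1) := by
    simp only [hqf]
    exact auxObs_contOn_dot hxcont hwcont
  have hgcont : ContinuousOn (fun p : ℝ × ℝ => gf p.1 p.2) (Set.Ici 0 ×ˢ Set.Icc 0 1) := by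
    simp only [hgf]
    exact auxObs_contOn_dot hwcont (auxObs_contOn_mulVec P₁ hwcont)
  -- derivative in time of the energy density
  have hqderiv : ∀ t ∈ Set.Ici (0:ℝ), ∀ ζ ∈ Set.Icc (0:ℝ) 1,
      HasDerivWithinAt (fun τ => qf τ ζ) (Df t ζ) (Set.Ici 0) t := by
    intro t ht ζ hζ
    have h := auxObs_dot_deriv (hxt t ht ζ hζ) (auxObs_mulVec_deriv (H ζ) (hxt t ht ζ hζ))
    have heq : star (xt t ζ) ⬝ᵥ (H ζ *ᵥ x t ζ) + star (x t ζ) ⬝ᵥ (H ζ *ᵥ xt t ζ)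
        = Df t ζ := by
      rw [hpde t ht ζ hζ, hDf]
      exact auxObs_pointwise P₁ G₀ (H ζ) hP₁herm.eq hG₀ (hHerm ζ hζ) (x t ζ) (wz t ζ)
    rw [hqf]
    exact heq ▸ h
  -- derivative in space of the boundary density
  have hgderiv : ∀ t ∈ Set.Ici (0:ℝ), ∀ ζ ∈ Set.Icc (0:ℝ) 1,
      HasDerivWithinAt (fun ξ => gf t ξ) (Df t ζ) (Set.Icc 0 1) ζ := by
    intro t ht ζ hζ
    have h := auxObs_dot_deriv (hwz t ht ζ hζ) (auxObs_mulVec_deriv P₁ (hwz t ht ζ hζ))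
    simp only [hgf, hDf]
    exact h
  -- FTC in ζ
  have hftcz : ∀ t ∈ Set.Ici (0:ℝ), ∫ ζ in (0:ℝ)..1, Df t ζ = gf t 1 - gf t 0 := by
    intro t ht
    refine intervalIntegral.integral_eq_sub_of_hasDeriv_right_of_le h01
      (fun ζ hζ => (hgderiv t ht ζ hζ).continuousWithinAt) ?_ ?_
    · intro ζ hζ
      exact ((hgderiv t ht ζ ⟨le_of_lt hζ.1, le_of_lt hζ.2⟩).hasDerivAt
        (Icc_mem_nhds hζ.1 hζ.2)).hasDerivWithinAt
    · apply ContinuousOn.intervalIntegrable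
      rw [huIcc]
      exact auxObs_slice1 hDcont ht
  -- FTC in t
  have hftct : ∀ T, 0 ≤ T → ∀ ζ ∈ Set.Icc (0:ℝ) 1,
      ∫ t in (0:ℝ)..T, Df t ζ = qf T ζ - qf 0 ζ := by
    intro T hT ζ hζ
    refine intervalIntegral.integral_eq_sub_of_hasDeriv_right_of_le hT
      (fun t ht' => ((hqderiv t ht'.1 ζ hζ).continuousWithinAt).mono
        (Set.Icc_subset_Ici_self)) ?_ ?_
    · intro t ht'
      exact ((hqderiv t (le_of_lt ht'.1) ζ hζ).hasDerivAt (Ici_mem_nhds ht'.1)).hasDerivWithinAt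
    · apply ContinuousOn.intervalIntegrable
      rw [Set.uIcc_of_le hT]
      exact (auxObs_slice2 hDcont hζ).mono Set.Icc_subset_Ici_self
  -- Fubini
  have hfubini : ∀ T, 0 ≤ T →
      ∫ ζ in (0:ℝ)..1, (∫ t in (0:ℝ)..T, Df t ζ)
        = ∫ t in (0:ℝ)..T, (∫ ζ in (0:ℝ)..1, Df t ζ) := by
    intro T hT
    have hint : Integrable (Function.uncurry fun ζ t => Df t ζ)
        ((volume.restrict (Set.Ioc (0:ℝ) 1)).prod (volume.restrict (Set.Ioc (0:ℝ) T))) := by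
      rw [Measure.prod_restrict]
      refine MeasureTheory.IntegrableOn.mono_set ?_
        (Set.prod_mono Set.Ioc_subset_Icc_self Set.Ioc_subset_Icc_self)
      apply ContinuousOn.integrableOn_compact (isCompact_Icc.prod isCompact_Icc)
      have h1 : Function.uncurry (fun ζ t => Df t ζ)
          = (fun p : ℝ × ℝ => Df p.1 p.2) ∘ Prod.swap := rfl
      rw [h1]
      exact hDcont.comp continuous_swap.continuousOn
        (fun p hp => ⟨hp.2.1, hp.1⟩)
    have h := MeasureTheory.integral_integral_swap (f := fun ζ t => Df t ζ) hint
    simp only [intervalIntegral.integral_of_le hT, intervalIntegral.integral_of_le h01]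
    exact h
  -- interval integrability of energy densities
  have hqint : ∀ T, 0 ≤ T → IntervalIntegrable (fun ζ => qf T ζ) volume 0 1 := by
    intro T hT
    apply ContinuousOn.intervalIntegrable
    rw [huIcc]
    exact auxObs_slice1 hqcont hT
  -- energy difference identity
  have hEdiff : ∀ T, 0 ≤ T →
      (∫ ζ in (0:ℝ)..1, qf T ζ) - (∫ ζ in (0:ℝ)..1, qf 0 ζ)
        = ∫ t in (0:ℝ)..T, (gf t 1 - gf t 0) := by
    intro T hT
    rw [← intervalIntegral.integral_sub (hqint T hT) (hqint 0 le_rfl)]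
    have h1 : Set.EqOn (fun ζ => qf T ζ - qf 0 ζ) (fun ζ => ∫ t in (0:ℝ)..T, Df t ζ)
        (Set.uIcc 0 1) := by
      intro ζ hζ
      rw [huIcc] at hζ
      exact (hftct T hT ζ hζ).symm
    rw [intervalIntegral.integral_congr h1, hfubini T hT]
    apply intervalIntegral.integral_congr
    intro t ht'
    rw [Set.uIcc_of_le hT] at ht'
    exact hftcz t ht'.1
  -- boundary term identity
  have hgb : ∀ t ∈ Set.Ici (0:ℝ), gf t 1 - gf t 0
      = star (Sum.elim (0 : Fin n → ℂ) (y t)) ⬝ᵥ (P *ᵥ Sum.elim (0 : Fin n → ℂ) (y t)) := by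
    intro t ht
    have hM : R₀ᴴ * Sig * R₀ = Matrix.fromBlocks P₁ 0 0 (-P₁) := by
      rw [hR₀, hSig]; exact auxObs_blocks n P₁ hP₁herm.eq
    set b : (Fin n ⊕ Fin n) → ℂ := Sum.elim (H 1 *ᵥ x t 1) (H 0 *ᵥ x t 0) with hb
    have hWb : W_BC *ᵥ b = Sum.elim (0 : Fin n → ℂ) (y t) := by
      rw [hb, hW_BC, Matrix.fromRows_mulVec, hbdry t ht, hy t]
    have hbinv : b = W_BC⁻¹ *ᵥ Sum.elim (0 : Fin n → ℂ) (y t) := by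
      rw [← hWb, Matrix.mulVec_mulVec, Matrix.nonsing_inv_mul _ hdet, Matrix.one_mulVec]
    have h1 : gf t 1 - gf t 0 = star b ⬝ᵥ ((Matrix.fromBlocks P₁ 0 0 (-P₁)) *ᵥ b) := by
      rw [hb]
      simp [hgf, Matrix.fromBlocks_mulVec, Function.star_sumElim,
        sumElim_dotProduct_sumElim, Matrix.zero_mulVec, Matrix.neg_mulVec,
        dotProduct_neg, sub_eq_add_neg]
    rw [h1, ← hM, hbinv, hP]
    generalize Sum.elim (0 : Fin n → ℂ) (y t) = v
    calc star (W_BC⁻¹ *ᵥ v) ⬝ᵥ ((R₀ᴴ * Sig * R₀) *ᵥ (W_BC⁻¹ *ᵥ v))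
        = (star v ᵥ* (W_BC⁻¹)ᴴ) ⬝ᵥ ((R₀ᴴ * Sig * R₀) *ᵥ (W_BC⁻¹ *ᵥ v)) := by
          rw [star_mulVec]
      _ = star v ⬝ᵥ (((W_BC⁻¹)ᴴ * R₀ᴴ * Sig * R₀ * W_BC⁻¹) *ᵥ v) := by
          rw [← dotProduct_mulVec]
          simp only [Matrix.mulVec_mulVec, Matrix.mul_assoc]
  -- lower bound for the boundary term's real part
  have hrebnd : ∀ t ∈ Set.Ici (0:ℝ),
      -(‖Matrix.toEuclideanCLM (𝕜 := ℂ) P‖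
          * ‖(EuclideanSpace.equiv (Fin n) ℂ).symm (y t)‖ ^ 2) ≤ (gf t 1 - gf t 0).re := by
    intro t ht
    rw [hgb t ht]
    have h := auxObs_re_bound P (Sum.elim (0 : Fin n → ℂ) (y t))
    rwa [auxObs_norm_sum_elim (y t)] at h
  -- uniform bound on H over [0,1]
  obtain ⟨C, hCb⟩ : ∃ C : ℝ, ∀ ζ ∈ Set.Icc (0:ℝ) 1,
      (∑ i, ∑ j, ‖H ζ i j‖) ≤ C := by
    have hcont : ContinuousOn (fun ζ => ∑ i, ∑ j, ‖H ζ i j‖)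
        (Set.Icc (0:ℝ) 1) :=
      continuousOn_finset_sum _ fun i _ => continuousOn_finset_sum _ fun j _ =>
        continuous_norm.comp_continuousOn (hHcont i j)
    obtain ⟨ζ₀, _, hmax⟩ := isCompact_Icc.exists_isMaxOn (Set.nonempty_Icc.2 h01) hcont
    exact ⟨_, fun ζ hζ => hmax hζ⟩
  -- the energy at time T is bounded by C times the L² norm
  have hqTbound : ∀ T, 0 ≤ T → (∫ ζ in (0:ℝ)..1, qf T ζ).re
      ≤ C * ∫ ζ in (0:ℝ)..1, ‖(EuclideanSpace.equiv (Fin n) ℂ).symm (x T ζ)‖ ^ 2 := by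
    intro T hT
    have hint := hqint T hT
    have hnxcont : ContinuousOn
        (fun ζ => ‖(EuclideanSpace.equiv (Fin n) ℂ).symm (x T ζ)‖ ^ 2) (Set.Icc (0:ℝ) 1) := by
      have hx' : ContinuousOn (fun ζ => x T ζ) (Set.Icc (0:ℝ) 1) := auxObs_slice1 hxcont hT
      exact (((EuclideanSpace.equiv (Fin n) ℂ).symm.continuous.comp_continuousOn hx').norm).pow 2
    have h1 : (∫ ζ in (0:ℝ)..1, qf T ζ).re = ∫ ζ in (0:ℝ)..1, (qf T ζ).re := by
      rw [intervalIntegral.integral_of_le h01, intervalIntegral.integral_of_le h01]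
      have := integral_re (𝕜 := ℂ) ((intervalIntegrable_iff_integrableOn_Ioc_of_le h01).1 hint)
      simpa [RCLike.re_to_complex] using this.symm
    have h2 : ∫ ζ in (0:ℝ)..1, (qf T ζ).re ≤ ∫ ζ in (0:ℝ)..1,
        C * ‖(EuclideanSpace.equiv (Fin n) ℂ).symm (x T ζ)‖ ^ 2 := by
      refine intervalIntegral.integral_mono_on h01 ?_ ?_ ?_
      · apply ContinuousOn.intervalIntegrable
        rw [huIcc]
        exact Complex.continuous_re.comp_continuousOn (auxObs_slice1 hqcont hT)
      · apply ContinuousOn.intervalIntegrable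
        rw [huIcc]
        exact continuousOn_const.mul hnxcont
      · intro ζ hζ
        simp only [hqf]
        refine le_trans (Complex.re_le_norm _)
          (le_trans (auxObs_q_bound (H ζ) (x T ζ)) ?_)
        exact mul_le_mul_of_nonneg_right (hCb ζ hζ) (by positivity)
    rw [intervalIntegral.integral_const_mul] at h2
    rw [h1]
    exact h2
  -- truncated output integrals are bounded by the total one
  have hyIoc : ∀ T, 0 ≤ T →
      ∫ t in (0:ℝ)..T, ‖(EuclideanSpace.equiv (Fin n) ℂ).symm (y t)‖ ^ 2
        ≤ ∫ t in Set.Ici (0:ℝ), ‖(EuclideanSpace.equiv (Fin n) ℂ).symm (y t)‖ ^ 2 := by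
    intro T hT
    rw [intervalIntegral.integral_of_le hT]
    refine MeasureTheory.setIntegral_mono_set hyint ?_ ?_
    · exact Filter.Eventually.of_forall fun t => by positivity
    · exact (Set.Ioc_subset_Icc_self.trans Set.Icc_subset_Ici_self).eventuallyLE
  -- lower bound for the integrated boundary term
  have hbnd_int : ∀ T, 0 ≤ T →
      -(‖Matrix.toEuclideanCLM (𝕜 := ℂ) P‖
          * ∫ t in Set.Ici (0:ℝ), ‖(EuclideanSpace.equiv (Fin n) ℂ).symm (y t)‖ ^ 2)
        ≤ (∫ t in (0:ℝ)..T, (gf t 1 - gf t 0)).re := by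
    intro T hT
    have hgcont' : ContinuousOn (fun t => gf t 1 - gf t 0) (Set.Icc (0:ℝ) T) :=
      ((auxObs_slice2 hgcont h1mem).sub (auxObs_slice2 hgcont h0mem)).mono
        Set.Icc_subset_Ici_self
    have hgint : IntervalIntegrable (fun t => gf t 1 - gf t 0) volume 0 T := by
      apply ContinuousOn.intervalIntegrable
      rwa [Set.uIcc_of_le hT]
    have hyintT : IntervalIntegrable
        (fun t => ‖(EuclideanSpace.equiv (Fin n) ℂ).symm (y t)‖ ^ 2) volume 0 T :=
      (intervalIntegrable_iff_integrableOn_Ioc_of_le hT).2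
        (hyint.mono_set (Set.Ioc_subset_Icc_self.trans Set.Icc_subset_Ici_self))
    have h1 : (∫ t in (0:ℝ)..T, (gf t 1 - gf t 0)).re
        = ∫ t in (0:ℝ)..T, (gf t 1 - gf t 0).re := by
      rw [intervalIntegral.integral_of_le hT, intervalIntegral.integral_of_le hT]
      have := integral_re (𝕜 := ℂ) ((intervalIntegrable_iff_integrableOn_Ioc_of_le hT).1 hgint)
      simpa [RCLike.re_to_complex] using this.symm
    have h2 : ∫ t in (0:ℝ)..T, -(‖Matrix.toEuclideanCLM (𝕜 := ℂ) P‖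
          * ‖(EuclideanSpace.equiv (Fin n) ℂ).symm (y t)‖ ^ 2)
        ≤ ∫ t in (0:ℝ)..T, (gf t 1 - gf t 0).re := by
      refine intervalIntegral.integral_mono_on hT ((hyintT.const_mul _).neg) ?_
        (fun t ht' => hrebnd t ht'.1)
      apply ContinuousOn.intervalIntegrable
      rw [Set.uIcc_of_le hT]
      exact Complex.continuous_re.comp_continuousOn hgcont'
    have h3 : ∫ t in (0:ℝ)..T, -(‖Matrix.toEuclideanCLM (𝕜 := ℂ) P‖
          * ‖(EuclideanSpace.equiv (Fin n) ℂ).symm (y t)‖ ^ 2)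
        = -(‖Matrix.toEuclideanCLM (𝕜 := ℂ) P‖
          * ∫ t in (0:ℝ)..T, ‖(EuclideanSpace.equiv (Fin n) ℂ).symm (y t)‖ ^ 2) := by
      rw [intervalIntegral.integral_neg, intervalIntegral.integral_const_mul]
    rw [h3] at h2
    have h5 := mul_le_mul_of_nonneg_left (hyIoc T hT)
      (norm_nonneg (Matrix.toEuclideanCLM (𝕜 := ℂ) P))
    rw [h1]
    linarith
  -- key inequality for all T ≥ 0
  have hkey : ∀ T, 0 ≤ T → (∫ ζ in (0:ℝ)..1, qf 0 ζ).re
      - ‖Matrix.toEuclideanCLM (𝕜 := ℂ) P‖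
          * ∫ t in Set.Ici (0:ℝ), ‖(EuclideanSpace.equiv (Fin n) ℂ).symm (y t)‖ ^ 2
      ≤ C * ∫ ζ in (0:ℝ)..1, ‖(EuclideanSpace.equiv (Fin n) ℂ).symm (x T ζ)‖ ^ 2 := by
    intro T hT
    have hE := congrArg Complex.re (hEdiff T hT)
    rw [Complex.sub_re] at hE
    have hq := hqTbound T hT
    have hb := hbnd_int T hT
    linarith
  have hlim : Tendsto (fun T => C * ∫ ζ in (0:ℝ)..1,
      ‖(EuclideanSpace.equiv (Fin n) ℂ).symm (x T ζ)‖ ^ 2) atTop (nhds 0) := by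
    have h := hdecay.const_mul C
    simpa using h
  have hfinal : (∫ ζ in (0:ℝ)..1, qf 0 ζ).re
      - ‖Matrix.toEuclideanCLM (𝕜 := ℂ) P‖
          * ∫ t in Set.Ici (0:ℝ), ‖(EuclideanSpace.equiv (Fin n) ℂ).symm (y t)‖ ^ 2 ≤ 0 :=
    ge_of_tendsto hlim (eventually_atTop.2 ⟨0, fun T hT => hkey T hT⟩)
  -- positivity of ‖P‖
  have hPne : P ≠ 0 := by
    intro h0
    have hM : R₀ᴴ * Sig * R₀ = Matrix.fromBlocks P₁ 0 0 (-P₁) := by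
      rw [hR₀, hSig]; exact auxObs_blocks n P₁ hP₁herm.eq
    have hWW : W_BCᴴ * (W_BC⁻¹)ᴴ = 1 := by
      rw [← Matrix.conjTranspose_mul, Matrix.nonsing_inv_mul _ hdet, Matrix.conjTranspose_one]
    have hM0 : Matrix.fromBlocks P₁ (0 : Matrix (Fin n) (Fin n) ℂ) 0 (-P₁) = 0 := by
      have h2 : W_BCᴴ * P * W_BC = Matrix.fromBlocks P₁ 0 0 (-P₁) := by
        rw [hP, ← hM]
        calc W_BCᴴ * ((W_BC⁻¹)ᴴ * R₀ᴴ * Sig * R₀ * W_BC⁻¹) * W_BC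
            = (W_BCᴴ * (W_BC⁻¹)ᴴ) * ((R₀ᴴ * Sig * R₀) * (W_BC⁻¹ * W_BC)) := by
              simp only [Matrix.mul_assoc]
          _ = R₀ᴴ * Sig * R₀ := by
              rw [hWW, Matrix.nonsing_inv_mul _ hdet, Matrix.one_mul, Matrix.mul_one]
      rw [← h2, h0, Matrix.mul_zero, Matrix.zero_mul]
    have hP₁0 : P₁ = 0 := by
      ext i j
      have := congrFun (congrFun hM0 (Sum.inl i)) (Sum.inl j)
      simpa [Matrix.fromBlocks] using this
    rw [hP₁0] at hP₁inv
    haveI hne : Nonempty (Fin n) := ⟨⟨0, hn⟩⟩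
    have hu := (Matrix.isUnit_iff_isUnit_det _).1 hP₁inv
    rw [Matrix.det_zero] at hu
    simp at hu
  have hPpos : 0 < ‖Matrix.toEuclideanCLM (𝕜 := ℂ) P‖ := by
    rw [norm_pos_iff]
    intro h0
    apply hPne
    have h1 : Matrix.toEuclideanCLM (𝕜 := ℂ) P
        = Matrix.toEuclideanCLM (𝕜 := ℂ) (0 : Matrix (Fin n ⊕ Fin n) (Fin n ⊕ Fin n) ℂ) := by
      rw [h0, map_zero]
    exact (Matrix.toEuclideanCLM (𝕜 := ℂ)).injective h1
  -- conclusion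
  have hgoal : (∫ ζ in (0 : ℝ)..1, star (x 0 ζ) ⬝ᵥ ((H ζ) *ᵥ x 0 ζ))
      = ∫ ζ in (0:ℝ)..1, qf 0 ζ := by
    simp only [hqf]
  rw [hgoal]
  have hne := ne_of_gt hPpos
  have harith : (2 / ‖Matrix.toEuclideanCLM (𝕜 := ℂ) P‖)
        * ((1 / 2 : ℝ) * (∫ ζ in (0:ℝ)..1, qf 0 ζ).re)
      = (∫ ζ in (0:ℝ)..1, qf 0 ζ).re / ‖Matrix.toEuclideanCLM (𝕜 := ℂ) P‖ := by
    field_simp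
  rw [harith, div_le_iff₀ hPpos]
  have hcomm := mul_comm (‖Matrix.toEuclideanCLM (𝕜 := ℂ) P‖)
    (∫ t in Set.Ici (0:ℝ), ‖(EuclideanSpace.equiv (Fin n) ℂ).symm (y t)‖ ^ 2)
  linarith
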